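/- Let L ≥ 1 be a natural number and Q an L×L generator matrix. Let F be a cumulative distribution function on [0,∞) with F(0)=0 and F^c := 1−F satisfying F^c(x) > 0 for all x ≥ 0, with the convention F^c(x) := 1 for x < 0. Let λ̄ : [0,∞) → [0,∞) be bounded Borel measurable, let i₀ : [0,∞) → ℝ^L be Borel measurable and Lebesgue integrable, and let b : [0,∞) → ℝ^L be continuous (both row-vector valued). Define i : [0,∞)×[0,∞) → ℝ^L by i(t,𝔞) = (F^c(𝔞)/F^c(𝔞−t))·i₀(𝔞−t)·exp(tQ) if 0 ≤ t ≤ 𝔞, and i(t,𝔞) = F^c(𝔞)·b(t−𝔞)·exp(𝔞Q) if 0 ≤ 𝔞 < t. Then for every t ≥ 0, the following identity of row vectors in ℝ^L holds: (∫₀^∞ λ̄(𝔞+t)·i₀(𝔞)d𝔞)·exp(tQ) + ∫₀ᵗ λ̄(t−s)·b(s)·exp((t−s)Q) ds = ∫₀^∞ λ̄(u)·i(t,u)·(F^c((u−t)⁺)/F^c(u)) du. -/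

import Mathlib

open Matrix intervalIntegral Set MeasureTheory

/-- `Q` is the generator matrix of a continuous-time Markov chain on `Fin L`:
nonnegative off-diagonal entries and zero row sums. -/
def IsGeneratorMatrix {L : ℕ} (Q : Matrix (Fin L) (Fin L) ℝ) : Prop :=
  (∀ i j, i ≠ j → 0 ≤ Q i j) ∧ ∀ i, ∑ j, Q i j = 0

set_option maxHeartbeats 800000 in
/-- **Equivalence of the two formulations (3.2) and (3.6) of the boundary condition**
in the proof of Theorem 3.1.  Here `F` is a c.d.f. on `[0,∞)` (extended by `0` on
`(-∞,0)`, so that `F^c = 1 - F` equals `1` there), and `i` is given by the explicit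
formulas (3.4)–(3.5). -/
theorem boundary_condition_equivalence
    (L : ℕ) (hL : 1 ≤ L) (Q : Matrix (Fin L) (Fin L) ℝ) (hQ : IsGeneratorMatrix Q)
    (F : ℝ → ℝ) (hF_zero : ∀ x ≤ (0:ℝ), F x = 0) (hF_mono : Monotone F)
    (hF_le : ∀ x, F x ≤ 1)
    (hF_rc : ∀ x, ContinuousWithinAt F (Ici x) x)
    (hFc_pos : ∀ x ≥ (0:ℝ), F x < 1)
    (lam : ℝ → ℝ) (lamStar : ℝ) (hlam_meas : Measurable lam)
    (hlam : ∀ x, lam x ∈ Icc (0:ℝ) lamStar)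
    (i₀ : ℝ → Fin L → ℝ) (hi₀_meas : Measurable i₀)
    (hi₀_int : IntegrableOn i₀ (Ioi 0))
    (b : ℝ → Fin L → ℝ) (hb : ContinuousOn b (Ici 0))
    (i : ℝ → ℝ → Fin L → ℝ)
    (hi_le : ∀ t 𝔞 : ℝ, 0 ≤ t → t ≤ 𝔞 →
      i t 𝔞 = ((1 - F 𝔞) / (1 - F (𝔞 - t))) •
        ((i₀ (𝔞 - t)) ᵥ* NormedSpace.exp (t • Q)))
    (hi_gt : ∀ t 𝔞 : ℝ, 0 ≤ 𝔞 → 𝔞 < t →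
      i t 𝔞 = (1 - F 𝔞) • ((b (t - 𝔞)) ᵥ* NormedSpace.exp (𝔞 • Q))) :
    ∀ t ≥ (0:ℝ),
      (∫ 𝔞 in Ioi (0:ℝ), lam (𝔞 + t) • i₀ 𝔞) ᵥ* NormedSpace.exp (t • Q)
        + (∫ s in (0:ℝ)..t, lam (t - s) • ((b s) ᵥ* NormedSpace.exp ((t - s) • Q)))
      = ∫ u in Ioi (0:ℝ), (lam u * ((1 - F (max (u - t) 0)) / (1 - F u))) • i t u := by
  intro t ht
  have hlam0 : ∀ x, 0 ≤ lam x := fun x => (hlam x).1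
  have hlam1 : ∀ x, lam x ≤ lamStar := fun x => (hlam x).2
  have hFc : ∀ x : ℝ, 0 < 1 - F x := by
    intro x
    rcases le_or_gt x 0 with h | h
    · rw [hF_zero x h]; norm_num
    · linarith [hFc_pos x h.le]
  obtain ⟨E, hE⟩ : ∃ E, E = NormedSpace.exp (t • Q) := ⟨_, rfl⟩
  rw [← hE]
  -- the continuous linear map `v ↦ v ᵥ* E`
  obtain ⟨l, hl⟩ : ∃ l : (Fin L → ℝ) →L[ℝ] (Fin L → ℝ), ∀ v, l v = v ᵥ* E :=
    ⟨LinearMap.toContinuousLinearMap E.vecMulLinear, fun v => rfl⟩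
  -- the piecewise description of the right-hand side integrand
  obtain ⟨g1, hg1⟩ : ∃ g1 : ℝ → Fin L → ℝ, g1 = fun u => lam u • ((i₀ (u - t)) ᵥ* E) :=
    ⟨_, rfl⟩
  obtain ⟨g2, hg2⟩ : ∃ g2 : ℝ → Fin L → ℝ,
      g2 = fun u => lam u • ((b (t - u)) ᵥ* NormedSpace.exp (u • Q)) := ⟨_, rfl⟩
  obtain ⟨g, hg⟩ : ∃ g : ℝ → Fin L → ℝ, g = fun u => if t < u then g1 u else g2 u := ⟨_, rfl⟩
  -- integrability of `𝔞 ↦ lam (𝔞 + t) • i₀ 𝔞` on `Ioi 0`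
  have h_in_int : IntegrableOn (fun 𝔞 => lam (𝔞 + t) • i₀ 𝔞) (Ioi 0) := by
    refine Integrable.mono' (hi₀_int.norm.smul lamStar)
      ((hlam_meas.comp (measurable_add_const t)).smul hi₀_meas).aestronglyMeasurable ?_
    filter_upwards with 𝔞
    rw [norm_smul, Real.norm_eq_abs, abs_of_nonneg (hlam0 _)]
    have : ‖i₀ 𝔞‖ ≥ 0 := norm_nonneg _
    calc lam (𝔞 + t) * ‖i₀ 𝔞‖ ≤ lamStar * ‖i₀ 𝔞‖ := by
          exact mul_le_mul_of_nonneg_right (hlam1 _) this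
      _ = (lamStar • fun a => ‖i₀ a‖) 𝔞 := rfl
  have h_in_int' : IntegrableOn (fun 𝔞 => lam (𝔞 + t) • ((i₀ 𝔞) ᵥ* E)) (Ioi 0) := by
    have h := l.integrable_comp h_in_int
    simp only [hl, Matrix.smul_vecMul] at h
    exact h
  -- measure-preserving translation
  have hmp : MeasurePreserving (fun x : ℝ => x + t) volume volume :=
    measurePreserving_add_right volume t
  have hemb : MeasurableEmbedding (fun x : ℝ => x + t) :=
    (Homeomorph.addRight t).isClosedEmbedding.measurableEmbedding
  have hpre : (fun x : ℝ => x + t) ⁻¹' (Ioi t) = Ioi 0 := by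
    ext x; simp [lt_add_iff_pos_left]
  -- integrability of `g1` on `Ioi t`
  have hg1_int : IntegrableOn g1 (Ioi t) := by
    rw [← hmp.integrableOn_comp_preimage hemb, hpre]
    have : (g1 ∘ fun x => x + t) = fun 𝔞 => lam (𝔞 + t) • ((i₀ 𝔞) ᵥ* E) := by
      funext 𝔞; simp [hg1, Function.comp]
    rw [this]; exact h_in_int'
  -- integral of `g1` over `Ioi t`
  have hg1_eq : ∫ u in Ioi t, g1 u
      = (∫ 𝔞 in Ioi (0:ℝ), lam (𝔞 + t) • i₀ 𝔞) ᵥ* E := by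
    have h1 : ∫ u in Ioi t, g1 u = ∫ 𝔞 in Ioi (0:ℝ), g1 (𝔞 + t) := by
      rw [← hmp.setIntegral_preimage_emb hemb g1 (Ioi t), hpre]
    have h2 : ∀ 𝔞 : ℝ, g1 (𝔞 + t) = l (lam (𝔞 + t) • i₀ 𝔞) := by
      intro 𝔞; simp [hg1, hl, Matrix.smul_vecMul, add_sub_cancel_right]
    rw [h1]
    simp_rw [h2]
    rw [l.integral_comp_comm h_in_int, hl]
  -- continuity of the `g2` core on `Icc 0 t`
  have hcont : ContinuousOn (fun u => (b (t - u)) ᵥ* NormedSpace.exp (u • Q)) (Icc 0 t) := by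
    have hbc : ContinuousOn (fun u : ℝ => b (t - u)) (Icc 0 t) := by
      apply hb.comp (continuous_const.sub continuous_id).continuousOn
      intro u hu; exact sub_nonneg.2 hu.2
    have hec : Continuous (fun u : ℝ => NormedSpace.exp (u • Q)) := by
      letI : SeminormedRing (Matrix (Fin L) (Fin L) ℝ) := Matrix.linftyOpSemiNormedRing
      letI : NormedRing (Matrix (Fin L) (Fin L) ℝ) := Matrix.linftyOpNormedRing
      letI : NormedAlgebra ℝ (Matrix (Fin L) (Fin L) ℝ) := Matrix.linftyOpNormedAlgebra
      letI : NormedAlgebra ℚ (Matrix (Fin L) (Fin L) ℝ) := NormedAlgebra.restrictScalars ℚ ℝ _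
      exact NormedSpace.exp_continuous.comp (continuous_id.smul continuous_const)
    refine continuousOn_pi.2 fun j => ?_
    have heq : (fun u => ((b (t - u)) ᵥ* NormedSpace.exp (u • Q)) j)
        = fun u => ∑ k, b (t - u) k * (NormedSpace.exp (u • Q)) k j := by
      funext u; simp [Matrix.vecMul, dotProduct]
    rw [heq]
    exact continuousOn_finset_sum _ fun k _ =>
      ((continuous_apply k).comp_continuousOn hbc).mul
        (((continuous_apply j).comp ((continuous_apply k).comp hec)).continuousOn)
  -- integrability of `g2` on `Ioc 0 t`
  have hg2_int : IntegrableOn g2 (Ioc 0 t) := by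
    have hbase : IntegrableOn (fun u => (b (t - u)) ᵥ* NormedSpace.exp (u • Q)) (Ioc 0 t) :=
      (hcont.integrableOn_compact isCompact_Icc).mono_set Ioc_subset_Icc_self
    rw [hg2]
    refine Integrable.mono' (hbase.norm.smul lamStar)
      (hlam_meas.aestronglyMeasurable.smul hbase.aestronglyMeasurable) ?_
    filter_upwards with u
    rw [norm_smul, Real.norm_eq_abs, abs_of_nonneg (hlam0 _)]
    calc lam u * ‖(b (t - u)) ᵥ* NormedSpace.exp (u • Q)‖
        ≤ lamStar * ‖(b (t - u)) ᵥ* NormedSpace.exp (u • Q)‖ :=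
          mul_le_mul_of_nonneg_right (hlam1 _) (norm_nonneg _)
      _ = (lamStar • fun a => ‖(b (t - a)) ᵥ* NormedSpace.exp (a • Q)‖) u := rfl
  -- integral of `g2` over `Ioc 0 t` equals the interval integral on the LHS
  have hg2_eq : (∫ s in (0:ℝ)..t, lam (t - s) • ((b s) ᵥ* NormedSpace.exp ((t - s) • Q)))
      = ∫ u in Ioc (0:ℝ) t, g2 u := by
    have hsub : (∫ s in (0:ℝ)..t, g2 (t - s)) = ∫ s in (t - t)..(t - 0), g2 s :=
      intervalIntegral.integral_comp_sub_left g2 t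
    have : (fun s => lam (t - s) • ((b s) ᵥ* NormedSpace.exp ((t - s) • Q)))
        = fun s => g2 (t - s) := by
      funext s; simp [hg2]
    rw [this, hsub]
    simp only [sub_self, sub_zero]
    rw [intervalIntegral.integral_of_le ht]
  -- a.e. identification of the RHS integrand with `g`
  have h_ae : ∀ᵐ u ∂(volume.restrict (Ioi (0:ℝ))),
      (lam u * ((1 - F (max (u - t) 0)) / (1 - F u))) • i t u = g u := by
    rw [ae_restrict_iff' measurableSet_Ioi]
    have hts : ∀ᵐ u : ℝ ∂volume, u ≠ t :=
      ae_iff.2 (by simp [not_not, measure_singleton])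
    filter_upwards [hts] with u hut hu
    rcases lt_or_gt_of_ne hut with hlt | hgt
    · -- u < t : use `hi_gt`
      have hu0 : 0 < u := hu
      rw [hi_gt t u hu0.le hlt]
      have hmax : max (u - t) 0 = 0 := max_eq_right (by linarith)
      rw [hmax, hF_zero 0 le_rfl]
      have hnt : ¬ t < u := not_lt.2 hlt.le
      simp only [hg, if_neg hnt, hg2, smul_smul]
      congr 1
      have h1 : (1 : ℝ) - F u ≠ 0 := (hFc u).ne'
      field_simp
      ring
    · -- u > t : use `hi_le`
      rw [hi_le t u ht hgt.le, ← hE]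
      have hmax : max (u - t) 0 = u - t := max_eq_left (by linarith)
      rw [hmax]
      simp only [hg, if_pos hgt, hg1, smul_smul]
      congr 1
      have h1 : (1 : ℝ) - F u ≠ 0 := (hFc u).ne'
      have h2 : (1 : ℝ) - F (u - t) ≠ 0 := (hFc (u - t)).ne'
      field_simp
  -- put everything together
  rw [MeasureTheory.integral_congr_ae h_ae]
  have hsplit : Ioc (0:ℝ) t ∪ Ioi t = Ioi 0 := Ioc_union_Ioi_eq_Ioi ht
  have hdisj : Disjoint (Ioc (0:ℝ) t) (Ioi t) := Ioc_disjoint_Ioi le_rfl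
  have hgc1 : IntegrableOn g (Ioc 0 t) := by
    refine hg2_int.congr_fun (fun u hu => ?_) measurableSet_Ioc
    simp only [hg, if_neg (not_lt.2 hu.2)]
  have hgc2 : IntegrableOn g (Ioi t) := by
    refine hg1_int.congr_fun (fun u hu => ?_) measurableSet_Ioi
    simp only [hg, if_pos hu.out]
  have hsum : ∫ u in Ioi (0:ℝ), g u = (∫ u in Ioc (0:ℝ) t, g u) + ∫ u in Ioi t, g u := by
    rw [← hsplit, setIntegral_union hdisj measurableSet_Ioi hgc1 hgc2]
  have e1 : ∫ u in Ioc (0:ℝ) t, g u = ∫ u in Ioc (0:ℝ) t, g2 u :=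
    setIntegral_congr_fun measurableSet_Ioc (fun u hu => by simp only [hg, if_neg (not_lt.2 hu.2)])
  have e2 : ∫ u in Ioi t, g u = ∫ u in Ioi t, g1 u :=
    setIntegral_congr_fun measurableSet_Ioi (fun u hu => by simp only [hg, if_pos hu.out])
  rw [hsum, e1, e2, hg1_eq, hg2_eq]
  exact add_comm _ _
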